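/- Let G be a finite group of order n acting by ring automorphisms on a commutative noetherian ring A of finite Krull dimension d, and let M be a finitely generated GA-module whose Krull dimension as an A-module is at most d. Write ℓ_A(M) = ω^d·ℓ_d(M) + ρ and ℓ_{GA}(M) = ω^d·ℓ_{G,d}(M) + ρ' with ordinals ρ, ρ' < ω^d and non-negative integers ℓ_d(M), ℓ_{G,d}(M). Then ℓ_{G,d}(M) ≤ ℓ_d(M) ≤ n·ℓ_{G,d}(M). -/

import Mathlib

noncomputable section

universe u

open Classical in
/-- The ordinal-valued "length" attached to an element of a poset `L`, defined by
well-founded recursion on `>` (available under the max-n condition, i.e. well-foundedness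
of `>`; junk value `0` otherwise): `gtRank x = sup { gtRank y + 1 : y > x }`.

For `L` the lattice of (`H`-stable) normal subgroups of a group `G` (resp. of submodules
of a module `M`), `gtRank N` is the ordinal length `ℓ(G/N)` (resp. `ℓ(M/N)`) of the
quotient, since (`H`-stable) normal subgroups of `G/N` correspond to those of `G`
containing `N`; in particular `gtRank ⊥ = ℓ(G)` (resp. `ℓ(M)`). -/
noncomputable def gtRank {L : Type u} [Preorder L] (x : L) : Ordinal.{u} :=
  if h : WellFounded ((· > ·) : L → L → Prop) then (h.apply x).rank else 0


namespace Stmt19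

open Ordinal

noncomputable def nadd (a b : Ordinal.{u}) : Ordinal.{u} :=
  max (⨆ x : Set.Iio a, Order.succ (nadd x.1 b)) (⨆ y : Set.Iio b, Order.succ (nadd a y.1))
termination_by (a, b)
decreasing_by
  · exact Prod.Lex.left _ _ x.2
  · exact Prod.Lex.right _ y.2

infixl:65 " ♯ " => nadd

theorem nadd_le_iff {a b c : Ordinal.{u}} :
    a ♯ b ≤ c ↔ (∀ a' < a, a' ♯ b < c) ∧ (∀ b' < b, a ♯ b' < c) := by
  rw [nadd, max_le_iff, Ordinal.iSup_le_iff, Ordinal.iSup_le_iff]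
  simp only [Order.succ_le_iff, Subtype.forall, Set.mem_Iio]

theorem nadd_lt_nadd_right {a' a : Ordinal.{u}} (h : a' < a) (b : Ordinal.{u}) :
    a' ♯ b < a ♯ b := (nadd_le_iff.1 le_rfl).1 a' h

theorem nadd_lt_nadd_left {b' b : Ordinal.{u}} (h : b' < b) (a : Ordinal.{u}) :
    a ♯ b' < a ♯ b := (nadd_le_iff.1 le_rfl).2 b' h

theorem nadd_le_nadd_left {b b' : Ordinal.{u}} (h : b ≤ b') (a : Ordinal.{u}) :
    a ♯ b ≤ a ♯ b' := by
  rcases h.lt_or_eq with h | rfl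
  · exact (nadd_lt_nadd_left h a).le
  · exact le_rfl

theorem nadd_le_nadd_right {a a' : Ordinal.{u}} (h : a ≤ a') (b : Ordinal.{u}) :
    a ♯ b ≤ a' ♯ b := by
  rcases h.lt_or_eq with h | rfl
  · exact (nadd_lt_nadd_right h b).le
  · exact le_rfl

theorem nadd_lt_nadd_of_lt_of_le {a b c d : Ordinal.{u}} (h1 : a < b) (h2 : c ≤ d) :
    a ♯ c < b ♯ d :=
  (nadd_le_nadd_left h2 a).trans_lt (nadd_lt_nadd_right h1 d)

theorem nadd_lt_nadd_of_le_of_lt {a b c d : Ordinal.{u}} (h1 : a ≤ b) (h2 : c < d) :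
    a ♯ c < b ♯ d :=
  (nadd_lt_nadd_left h2 a).trans_le (nadd_le_nadd_right h1 d)

theorem nadd_zero (a : Ordinal.{u}) : a ♯ 0 = a := by
  induction a using Ordinal.induction with
  | _ a IH =>
    apply le_antisymm
    · rw [nadd_le_iff]
      refine ⟨fun a' ha' => ?_, fun b' hb' => (not_lt_zero hb').elim⟩
      rw [IH a' ha']; exact ha'
    · refine le_of_forall_lt fun c hc => ?_
      rw [← IH c hc]; exact nadd_lt_nadd_right hc 0

theorem zero_nadd (a : Ordinal.{u}) : 0 ♯ a = a := by
  induction a using Ordinal.induction with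
  | _ a IH =>
    apply le_antisymm
    · rw [nadd_le_iff]
      refine ⟨fun a' ha' => (not_lt_zero ha').elim, fun b' hb' => ?_⟩
      rw [IH b' hb']; exact hb'
    · refine le_of_forall_lt fun c hc => ?_
      rw [← IH c hc]; exact nadd_lt_nadd_left hc 0


/-! ### Ordinal arithmetic helpers -/

lemma opow_nat_pos (e : ℕ) : (0 : Ordinal.{u}) < ω ^ (e : Ordinal.{u}) :=
  opow_pos _ omega0_pos

lemma opow_nat_ne (e : ℕ) : (ω ^ (e : Ordinal.{u})) ≠ 0 := (opow_nat_pos e).ne'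

lemma opow_nat_succ (e : ℕ) :
    (ω : Ordinal.{u}) ^ ((e + 1 : ℕ) : Ordinal.{u}) = ω ^ (e : Ordinal.{u}) * ω := by
  rw [Nat.cast_succ, opow_add, opow_one]

/-- `a < ω^e * (a / ω^e + 1)`. -/
lemma lt_opow_mul_div_succ (e : ℕ) (a : Ordinal.{u}) :
    a < ω ^ (e : Ordinal.{u}) * (a / ω ^ (e : Ordinal.{u}) + 1) := by
  have := lt_mul_div_add a (opow_nat_ne.{u} e)
  rwa [← mul_add_one] at this

lemma div_lt_omega0_of_lt_opow_succ {e : ℕ} {a : Ordinal.{u}}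
    (h : a < ω ^ ((e + 1 : ℕ) : Ordinal.{u})) : a / ω ^ (e : Ordinal.{u}) < ω := by
  rw [div_lt (opow_nat_ne.{u} e), ← opow_nat_succ]; exact h

/-- Sharp bound for natural addition in terms of division by `ω^e`.
Assumes the principality of `ω^e` for `♯` as a hypothesis `hp`. -/
lemma nadd_le_of_div (e : ℕ)
    (hp : ∀ a b : Ordinal.{u}, a < ω ^ (e : Ordinal.{u}) → b < ω ^ (e : Ordinal.{u}) →
      a ♯ b < ω ^ (e : Ordinal.{u})) :
    ∀ o a b : Ordinal.{u}, a ♯ b = o →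
      a / ω ^ (e : Ordinal.{u}) < ω → b / ω ^ (e : Ordinal.{u}) < ω →
      a ♯ b ≤ ω ^ (e : Ordinal.{u}) * (a / ω ^ (e : Ordinal.{u}) + b / ω ^ (e : Ordinal.{u}))
        + (a % ω ^ (e : Ordinal.{u}) ♯ b % ω ^ (e : Ordinal.{u})) := by
  set W : Ordinal.{u} := ω ^ (e : Ordinal.{u}) with hW
  have hWne : W ≠ 0 := opow_nat_ne e
  intro o
  induction o using Ordinal.induction with
  | _ o IH =>
    intro a b hab ha hb
    subst hab
    rw [nadd_le_iff]
    constructor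
    · intro a' ha'
      have hstep : a' ♯ b < a ♯ b := nadd_lt_nadd_right ha' b
      have hdivle : a' / W ≤ a / W := by
        rw [div_le hWne]
        exact ha'.trans ((lt_mul_div_add a hWne).trans_le (le_of_eq (by rw [mul_succ])))
      have ha'div : a' / W < ω := lt_of_le_of_lt hdivle ha
      have h1 := IH _ hstep a' b rfl ha'div hb
      rcases lt_or_eq_of_le hdivle with hlt | heq
      · -- a'/W < a/W : bound by one lower block
        have hrem : a' % W ♯ b % W < W := hp _ _ (mod_lt _ hWne) (mod_lt _ hWne)
        have h2 : a' ♯ b < W * (a' / W + b / W) + W :=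
          lt_of_le_of_lt h1 (add_lt_add_right hrem _)
        have h3 : W * (a' / W + b / W) + W ≤ W * (a / W + b / W) := by
          rw [← mul_add_one]
          apply mul_le_mul_right
          obtain ⟨na', hna'⟩ := lt_omega0.1 ha'div
          obtain ⟨na, hna⟩ := lt_omega0.1 ha
          obtain ⟨nb, hnb⟩ := lt_omega0.1 hb
          rw [hna', hna] at hlt
          rw [hna', hna, hnb]
          have h4 : na' + nb + 1 ≤ na + nb := by
            have : na' < na := by exact_mod_cast hlt
            omega
          calc ((na' : Ordinal.{u}) + nb) + 1 = ((na' + nb + 1 : ℕ) : Ordinal) := by norm_cast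
            _ ≤ ((na + nb : ℕ) : Ordinal) := by exact_mod_cast h4
            _ = (na : Ordinal) + nb := by norm_cast
        exact lt_of_lt_of_le h2 (h3.trans le_self_add)
      · -- same quotient, smaller remainder
        have hmod : a' % W < a % W := by
          have e1 := div_add_mod a' W
          have e2 := div_add_mod a W
          rw [heq] at e1
          have : W * (a / W) + a' % W < W * (a / W) + a % W := by
            rw [e1, e2]; exact ha'
          exact lt_of_add_lt_add_left this
        refine lt_of_le_of_lt h1 ?_
        rw [heq]
        exact add_lt_add_right (nadd_lt_nadd_right hmod _) _
    · intro b' hb'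
      have hstep : a ♯ b' < a ♯ b := nadd_lt_nadd_left hb' a
      have hdivle : b' / W ≤ b / W := by
        rw [div_le hWne]
        exact hb'.trans ((lt_mul_div_add b hWne).trans_le (le_of_eq (by rw [mul_succ])))
      have hb'div : b' / W < ω := lt_of_le_of_lt hdivle hb
      have h1 := IH _ hstep a b' rfl ha hb'div
      rcases lt_or_eq_of_le hdivle with hlt | heq
      · have hrem : a % W ♯ b' % W < W := hp _ _ (mod_lt _ hWne) (mod_lt _ hWne)
        have h2 : a ♯ b' < W * (a / W + b' / W) + W :=
          lt_of_le_of_lt h1 (add_lt_add_right hrem _)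
        have h3 : W * (a / W + b' / W) + W ≤ W * (a / W + b / W) := by
          rw [← mul_add_one]
          apply mul_le_mul_right
          obtain ⟨na, hna⟩ := lt_omega0.1 ha
          obtain ⟨nb', hnb'⟩ := lt_omega0.1 hb'div
          obtain ⟨nb, hnb⟩ := lt_omega0.1 hb
          rw [hnb', hnb] at hlt
          rw [hna, hnb', hnb]
          have h4 : na + nb' + 1 ≤ na + nb := by
            have : nb' < nb := by exact_mod_cast hlt
            omega
          calc ((na : Ordinal.{u}) + nb') + 1 = ((na + nb' + 1 : ℕ) : Ordinal) := by norm_cast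
            _ ≤ ((na + nb : ℕ) : Ordinal) := by exact_mod_cast h4
            _ = (na : Ordinal) + nb := by norm_cast
        exact lt_of_lt_of_le h2 (h3.trans le_self_add)
      · have hmod : b' % W < b % W := by
          have e1 := div_add_mod b' W
          have e2 := div_add_mod b W
          rw [heq] at e1
          have : W * (b / W) + b' % W < W * (b / W) + b % W := by
            rw [e1, e2]; exact hb'
          exact lt_of_add_lt_add_left this
        refine lt_of_le_of_lt h1 ?_
        rw [heq]
        exact add_lt_add_right (nadd_lt_nadd_left hmod _) _

/-- Principality of `ω^e` (`e : ℕ`) for natural addition. -/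
lemma nadd_lt_opow (e : ℕ) :
    ∀ a b : Ordinal.{u}, a < ω ^ (e : Ordinal.{u}) → b < ω ^ (e : Ordinal.{u}) →
      a ♯ b < ω ^ (e : Ordinal.{u}) := by
  induction e with
  | zero =>
    intro a b ha hb
    simp only [Nat.cast_zero, opow_zero, lt_one_iff_zero] at *
    rw [ha, hb, nadd_zero]
  | succ e IH =>
    intro a b ha hb
    rw [opow_nat_succ] at ha hb ⊢
    have hda : a / ω ^ (e : Ordinal.{u}) < ω := by rw [div_lt (opow_nat_ne.{u} e)]; exact ha
    have hdb : b / ω ^ (e : Ordinal.{u}) < ω := by rw [div_lt (opow_nat_ne.{u} e)]; exact hb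
    have h1 := nadd_le_of_div e IH (a ♯ b) a b rfl hda hdb
    have hrem : a % ω ^ (e : Ordinal.{u}) ♯ b % ω ^ (e : Ordinal.{u}) < ω ^ (e : Ordinal.{u}) :=
      IH _ _ (mod_lt _ (opow_nat_ne e)) (mod_lt _ (opow_nat_ne e))
    have h2 : a ♯ b < ω ^ (e : Ordinal.{u}) * (a / ω ^ (e : Ordinal.{u}) + b / ω ^ (e : Ordinal.{u})) + ω ^ (e : Ordinal.{u}) :=
      lt_of_le_of_lt h1 (add_lt_add_right hrem _)
    rw [← mul_add_one] at h2
    refine h2.trans_le (mul_le_mul_right ?_ _)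
    obtain ⟨na, hna⟩ := lt_omega0.1 hda
    obtain ⟨nb, hnb⟩ := lt_omega0.1 hdb
    rw [hna, hnb]
    have : ((na : Ordinal.{u}) + nb + 1) = ((na + nb + 1 : ℕ) : Ordinal) := by norm_cast
    rw [this]
    exact (nat_lt_omega0 _).le

/-- The key combination: `a < ω^e·(p+1)`, `b < ω^e·(q+1)` imply `a ♯ b < ω^e·(p+q+1)`. -/
lemma nadd_lt_opow_mul (e p q : ℕ) {a b : Ordinal.{u}}
    (ha : a < ω ^ (e : Ordinal.{u}) * ((p : Ordinal) + 1))
    (hb : b < ω ^ (e : Ordinal.{u}) * ((q : Ordinal) + 1)) :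
    a ♯ b < ω ^ (e : Ordinal.{u}) * ((p : Ordinal) + (q : Ordinal) + 1) := by
  set W : Ordinal.{u} := ω ^ (e : Ordinal.{u}) with hW
  have hWne : W ≠ 0 := opow_nat_ne e
  have hpa : a / W ≤ (p : Ordinal) := by
    rw [div_le hWne]
    rwa [← Ordinal.add_one_eq_succ]
  have hqb : b / W ≤ (q : Ordinal) := by
    rw [div_le hWne]
    rwa [← Ordinal.add_one_eq_succ]
  have hda : a / W < ω := lt_of_le_of_lt hpa (nat_lt_omega0 p)
  have hdb : b / W < ω := lt_of_le_of_lt hqb (nat_lt_omega0 q)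
  have h1 := nadd_le_of_div e (nadd_lt_opow e) (a ♯ b) a b rfl hda hdb
  have hrem : a % W ♯ b % W < W :=
    nadd_lt_opow e _ _ (mod_lt _ hWne) (mod_lt _ hWne)
  have h2 : a ♯ b < W * (a / W + b / W) + W := lt_of_le_of_lt h1 (add_lt_add_right hrem _)
  rw [← mul_add_one] at h2
  refine h2.trans_le (mul_le_mul_right ?_ _)
  have := add_le_add hpa hqb
  exact add_le_add_left this 1

/-! ### Rank machinery -/

section RankCore

universe v
variable {α β : Type v} {r : α → α → Prop} {s : β → β → Prop}

lemma acc_rank_congr {x : α} (h h' : Acc r x) : h.rank = h'.rank := by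
  rw [Subsingleton.elim h h']

lemma Acc.rank_le_of' {x : α} (h : Acc r x) {c : Ordinal.{v}}
    (H : ∀ y (hr : r y x), (h.inv hr).rank < c) : h.rank ≤ c := by
  rw [h.rank_eq]
  exact Ordinal.iSup_le fun b => Order.succ_le_of_lt (H b b.2)

lemma rank_le_rank_map (wfr : WellFounded r) (wfs : WellFounded s) (f : α → β) (P : α → Prop)
    (hstep : ∀ ⦃x y⦄, P x → r y x → P y ∧ s (f y) (f x)) :
    ∀ x, P x → (wfr.apply x).rank ≤ (wfs.apply (f x)).rank := fun x =>
  wfr.induction (C := fun z => P z → (wfr.apply z).rank ≤ (wfs.apply (f z)).rank) x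
    (fun x IH hx => by
      apply Acc.rank_le_of'
      intro y hr
      obtain ⟨hPy, hs⟩ := hstep hx hr
      have h1 : (wfr.apply y).rank ≤ (wfs.apply (f y)).rank := IH y hr hPy
      have h2 : (wfs.apply (f y)).rank < (wfs.apply (f x)).rank := by
        have h3 := Acc.rank_lt_of_rel (wfs.apply (f x)) hs
        rwa [acc_rank_congr ((wfs.apply (f x)).inv hs) (wfs.apply (f y))] at h3
      rw [acc_rank_congr ((wfr.apply x).inv hr) (wfr.apply y)]
      exact lt_of_le_of_lt h1 h2)

lemma rank_le_rank_map' (wfr : WellFounded r) (wfs : WellFounded s) (P : α → Prop)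
    (f : ∀ x, P x → β)
    (hstep : ∀ x y (hx : P x), r y x → ∃ hy : P y, s (f y hy) (f x hx)) :
    ∀ x (hx : P x), (wfr.apply x).rank ≤ (wfs.apply (f x hx)).rank := fun x =>
  wfr.induction (C := fun z => ∀ hz : P z, (wfr.apply z).rank ≤ (wfs.apply (f z hz)).rank) x
    (fun x IH hx => by
      apply Acc.rank_le_of'
      intro y hr
      obtain ⟨hPy, hs⟩ := hstep x y hx hr
      have h1 : (wfr.apply y).rank ≤ (wfs.apply (f y hPy)).rank := IH y hr hPy
      have h2 : (wfs.apply (f y hPy)).rank < (wfs.apply (f x hx)).rank := by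
        have h3 := Acc.rank_lt_of_rel (wfs.apply (f x hx)) hs
        rwa [acc_rank_congr ((wfs.apply (f x hx)).inv hs) (wfs.apply (f y hPy))] at h3
      rw [acc_rank_congr ((wfr.apply x).inv hr) (wfr.apply y)]
      exact lt_of_le_of_lt h1 h2)

end RankCore

section Rks

variable {L : Type u} [Preorder L]

/-- the relation "`y` is above `x` and belongs to `S`" -/
def grel (S : Set L) : L → L → Prop := fun y x => x < y ∧ y ∈ S

lemma grel_wf (wf : WellFounded ((· > ·) : L → L → Prop)) (S : Set L) :
    WellFounded (grel S) :=
  Subrelation.wf (fun h => h.1) wf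

/-- The ordinal length of the interval above `x` inside `S`. -/
noncomputable def rks (wf : WellFounded ((· > ·) : L → L → Prop)) (S : Set L) (x : L) :
    Ordinal.{u} :=
  ((grel_wf wf S).apply x).rank

variable (wf : WellFounded ((· > ·) : L → L → Prop)) {S T : Set L}

lemma rks_lt_of {x y : L} (hy : y ∈ S) (hxy : x < y) : rks wf S y < rks wf S x := by
  have hg : grel S y x := ⟨hxy, hy⟩
  have h := Acc.rank_lt_of_rel ((grel_wf wf S).apply x) hg
  rwa [acc_rank_congr (((grel_wf wf S).apply x).inv hg) ((grel_wf wf S).apply y)] at h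

lemma rks_le {x : L} {c : Ordinal.{u}} (H : ∀ y, y ∈ S → x < y → rks wf S y < c) :
    rks wf S x ≤ c := by
  apply Acc.rank_le_of'
  intro y hr
  rw [acc_rank_congr (((grel_wf wf S).apply x).inv hr) ((grel_wf wf S).apply y)]
  exact H y hr.2 hr.1

lemma rks_exists_of_lt {x : L} {c : Ordinal.{u}} (h : c < rks wf S x) :
    ∃ y, y ∈ S ∧ x < y ∧ c ≤ rks wf S y := by
  by_contra hcon
  push_neg at hcon
  exact absurd (rks_le wf fun y hy hxy => hcon y hy hxy) (not_le.2 h)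

lemma rks_anti {x x' : L} (h : x ≤ x') : rks wf S x' ≤ rks wf S x :=
  rks_le wf fun y hy hxy => rks_lt_of wf hy (lt_of_le_of_lt h hxy)

lemma rks_le_map {f : L → L} {P : L → Prop} {x : L} (hx : P x)
    (hstep : ∀ ⦃u y⦄, P u → y ∈ S → u < y → P y ∧ f y ∈ T ∧ f u < f y) :
    rks wf S x ≤ rks wf T (f x) :=
  rank_le_rank_map (grel_wf wf S) (grel_wf wf T) f P
    (fun u y hu hr => ⟨(hstep hu hr.2 hr.1).1,
      (hstep hu hr.2 hr.1).2.2, (hstep hu hr.2 hr.1).2.1⟩) x hx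

lemma rks_mono_set (hST : S ⊆ T) (x : L) : rks wf S x ≤ rks wf T x :=
  rks_le_map (f := id) (P := fun _ => True) wf trivial
    (fun _ y _ hy hlt => ⟨trivial, hST hy, hlt⟩)

lemma rks_congr_set (hST : S = T) (x : L) : rks wf S x = rks wf T x := by
  subst hST; rfl

lemma rks_eq_zero {x : L} (H : ∀ y, y ∈ S → ¬ x < y) : rks wf S x = 0 :=
  le_antisymm (by simpa using rks_le wf (c := 0) fun y hy hxy => absurd hxy (H y hy))
    zero_le

/-- Additive lower bound (Brookfield's lower inequality, lattice form). -/
lemma rks_add_le {a : L} : ∀ (β : Ordinal.{u}) (x : L), x ≤ a →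
    β ≤ rks wf (S ∩ Set.Iic a) x → rks wf S a + β ≤ rks wf S x := by
  intro β
  induction β using Ordinal.limitRecOn with
  | zero =>
    intro x hxa _
    rw [add_zero]
    exact rks_anti wf hxa
  | add_one γ IH =>
    intro x hxa hβ
    have hγ : γ < rks wf (S ∩ Set.Iic a) x := (Order.lt_add_one_iff.2 le_rfl).trans_le hβ
    obtain ⟨y, hyS, hxy, hy⟩ := rks_exists_of_lt wf hγ
    have h1 : rks wf S a + γ ≤ rks wf S y := IH y hyS.2 (le_trans hy (le_of_eq rfl))
    rw [← add_assoc, Ordinal.add_one_eq_succ]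
    exact Order.succ_le_of_lt (lt_of_le_of_lt h1 (rks_lt_of wf hyS.1 hxy))
  | limit γ hγ IH =>
    intro x hxa hβ
    rw [(Ordinal.add_le_iff_of_isSuccLimit hγ : rks wf S a + γ ≤ rks wf S x ↔ _)]
    intro γ' hγ'
    exact IH γ' hγ' x hxa (le_trans (le_of_lt hγ') hβ)

end Rks

section RksLattice

variable {L : Type u} [Lattice L] [IsModularLattice L]
variable (wf : WellFounded ((· > ·) : L → L → Prop)) {S : Set L}

/-- Brookfield's upper inequality, lattice form. -/
lemma rks_le_nadd {a : L} (haS : a ∈ S)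
    (hsup : ∀ {u v : L}, u ∈ S → v ∈ S → u ⊔ v ∈ S)
    (hinf : ∀ {u v : L}, u ∈ S → v ∈ S → u ⊓ v ∈ S) (x : L) :
    rks wf S x ≤ rks wf S (x ⊔ a) ♯ rks wf (S ∩ Set.Iic a) (x ⊓ a) :=
  wf.induction
    (C := fun z => rks wf S z ≤ rks wf S (z ⊔ a) ♯ rks wf (S ∩ Set.Iic a) (z ⊓ a)) x
    (fun x IH => by
      apply rks_le
      intro y hyS hxy
      have IH' := IH y hxy
      have hsup_le : x ⊔ a ≤ y ⊔ a := sup_le_sup_right hxy.le a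
      have hinf_le : x ⊓ a ≤ y ⊓ a := inf_le_inf_right a hxy.le
      rcases lt_or_eq_of_le hsup_le with h1 | h1
      · have c1 : rks wf S (y ⊔ a) < rks wf S (x ⊔ a) := rks_lt_of wf (hsup hyS haS) h1
        have c2 : rks wf (S ∩ Set.Iic a) (y ⊓ a) ≤ rks wf (S ∩ Set.Iic a) (x ⊓ a) :=
          rks_anti wf hinf_le
        exact lt_of_le_of_lt IH' (nadd_lt_nadd_of_lt_of_le c1 c2)
      · rcases lt_or_eq_of_le hinf_le with h2 | h2
        · have c2 : rks wf (S ∩ Set.Iic a) (y ⊓ a) < rks wf (S ∩ Set.Iic a) (x ⊓ a) :=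
            rks_lt_of wf ⟨hinf hyS haS, inf_le_right⟩ h2
          refine lt_of_le_of_lt IH' ?_
          rw [← h1]
          exact nadd_lt_nadd_of_le_of_lt le_rfl c2
        · exact absurd (eq_of_le_of_inf_le_of_sup_le hxy.le h2.ge h1.ge) (ne_of_lt hxy))

end RksLattice

section GtRankLink

variable {L : Type u} [Preorder L]
variable (wf : WellFounded ((· > ·) : L → L → Prop))

lemma gtRank_eq_rks (x : L) : gtRank x = rks wf Set.univ x := by
  unfold gtRank
  rw [dif_pos wf]
  apply le_antisymm
  · exact rank_le_rank_map wf (grel_wf wf Set.univ) id (fun _ => True)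
      (fun u y _ h => ⟨trivial, h, trivial⟩) x trivial
  · exact rank_le_rank_map (grel_wf wf Set.univ) wf id (fun _ => True)
      (fun u y _ h => ⟨trivial, h.1⟩) x trivial

end GtRankLink

lemma subtype_wf {L : Type u} [Preorder L] (wf : WellFounded ((· > ·) : L → L → Prop))
    (P : L → Prop) :
    WellFounded ((· > ·) : {y : L // P y} → {y : L // P y} → Prop) :=
  InvImage.wf Subtype.val wf

section GtRankLink2

variable {L : Type u} [Preorder L]
variable (wf : WellFounded ((· > ·) : L → L → Prop))

lemma gtRank_subtype_eq_rks (P : L → Prop) (x : L) (hx : P x) :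
    gtRank (⟨x, hx⟩ : {y : L // P y}) = rks wf {y : L | P y} x := by
  unfold gtRank
  rw [dif_pos (subtype_wf wf P)]
  apply le_antisymm
  · exact rank_le_rank_map (subtype_wf wf P) (grel_wf wf {y : L | P y}) Subtype.val
      (fun _ => True) (fun u y _ h => ⟨trivial, Subtype.coe_lt_coe.2 h, y.2⟩) _ trivial
  · exact rank_le_rank_map' (grel_wf wf {y : L | P y}) (subtype_wf wf P) P
      (fun y hy => ⟨y, hy⟩)
      (fun u y hu hr => ⟨hr.2, Subtype.mk_lt_mk.2 hr.1⟩) x hx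

end GtRankLink2

section IicLemmas

variable {L : Type u} [Lattice L] [IsModularLattice L]
variable (wf : WellFounded ((· > ·) : L → L → Prop))

lemma Iic_inter_eq {a b : L} (hab : a ≤ b) : Set.Iic b ∩ Set.Iic a = Set.Iic a :=
  Set.inter_eq_right.2 (fun z hz => le_trans hz hab)

/-- `ℓ(b/a) + ℓ(a/x) ≤ ℓ(b/x)` (Brookfield lower bound). -/
lemma L1A {a b x : L} (hxa : x ≤ a) (hab : a ≤ b) :
    rks wf (Set.Iic b) a + rks wf (Set.Iic a) x ≤ rks wf (Set.Iic b) x := by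
  have h := rks_add_le wf (S := Set.Iic b) (a := a)
    (rks wf (Set.Iic b ∩ Set.Iic a) x) x hxa le_rfl
  rwa [rks_congr_set wf (Iic_inter_eq hab) x] at h

/-- `ℓ(b/x) ≤ ℓ(b/(x ⊔ a)) ♯ ℓ(a/(x ⊓ a))` (Brookfield upper bound). -/
lemma L2A {a b : L} (hab : a ≤ b) (x : L) :
    rks wf (Set.Iic b) x ≤ rks wf (Set.Iic b) (x ⊔ a) ♯ rks wf (Set.Iic a) (x ⊓ a) := by
  have h := rks_le_nadd wf (S := Set.Iic b) (a := a) hab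
    (fun hu hv => sup_le hu hv) (fun hu _ => le_trans inf_le_left hu) x
  rwa [rks_congr_set wf (Iic_inter_eq hab) (x ⊓ a)] at h

lemma rks_top_eq_zero {S : Set L} {b : L} (hb : ∀ y ∈ S, y ≤ b) :
    rks wf S b = 0 :=
  rks_eq_zero wf fun y hy hlt => absurd (hb y hy) hlt.not_ge

/-- `ℓ((x⊔a)/x) ≤ ℓ(a/(x⊓a))`. -/
lemma rks_pair (a x : L) :
    rks wf (Set.Iic (x ⊔ a)) x ≤ rks wf (Set.Iic a) (x ⊓ a) := by
  have h := L2A wf (le_sup_right : a ≤ x ⊔ a) x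
  have h0 : rks wf (Set.Iic (x ⊔ a)) (x ⊔ a) = 0 :=
    rks_top_eq_zero wf (S := Set.Iic (x ⊔ a)) (fun y hy => hy)
  rw [h0, zero_nadd] at h
  exact h

/-- Modular isomorphism transfer: `ℓ(u/(u⊓v)) = ℓ((u⊔v)/v)`. -/
lemma rks_modular (u v : L) :
    rks wf (Set.Iic u) (u ⊓ v) = rks wf (Set.Iic (u ⊔ v)) v := by
  apply le_antisymm
  · have h := rks_le_map wf (S := Set.Iic u) (T := Set.Iic (u ⊔ v)) (f := (· ⊔ v))
      (P := fun z => u ⊓ v ≤ z ∧ z ≤ u) (x := u ⊓ v) ⟨le_rfl, inf_le_left⟩ ?_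
    · exact h.trans_eq (congrArg _ (sup_eq_right.2 inf_le_right : u ⊓ v ⊔ v = v))
    · intro z y hz hy hzy
      refine ⟨⟨le_trans hz.1 hzy.le, hy⟩, sup_le_sup_right hy v, ?_⟩
      rcases lt_or_eq_of_le (sup_le_sup_right hzy.le v) with h1 | h1
      · exact h1
      · exfalso
        have hinf : y ⊓ v ≤ z ⊓ v :=
          le_inf (le_trans (inf_le_inf_right v hy) hz.1) inf_le_right
        exact (ne_of_lt hzy) (eq_of_le_of_inf_le_of_sup_le hzy.le hinf h1.ge)
  · have h := rks_le_map wf (S := Set.Iic (u ⊔ v)) (T := Set.Iic u) (f := (· ⊓ u))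
      (P := fun z => v ≤ z ∧ z ≤ u ⊔ v) (x := v) ⟨le_rfl, le_sup_right⟩ ?_
    · exact h.trans_eq (congrArg _ (inf_comm v u))
    · intro z y hz hy hzy
      refine ⟨⟨le_trans hz.1 hzy.le, hy⟩, inf_le_right, ?_⟩
      rcases lt_or_eq_of_le (inf_le_inf_right u hzy.le) with h1 | h1
      · exact h1
      · exfalso
        have hsup : y ⊔ u ≤ z ⊔ u := by
          refine le_trans (sup_le hy le_sup_left) ?_
          exact sup_le le_sup_right (le_trans hz.1 le_sup_left)
        exact (ne_of_lt hzy) (eq_of_le_of_inf_le_of_sup_le hzy.le h1.ge hsup)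

/-- Meet subadditivity: `ℓ(b/(u⊓v)) ≤ ℓ(b/u) ♯ ℓ(b/v)`. -/
lemma rks_meet {u v b : L} (hub : u ≤ b) (hvb : v ≤ b) :
    rks wf (Set.Iic b) (u ⊓ v) ≤ rks wf (Set.Iic b) u ♯ rks wf (Set.Iic b) v := by
  have h1 := L2A wf (a := u) (b := b) hub (u ⊓ v)
  rw [sup_eq_right.2 inf_le_left, inf_eq_left.2 inf_le_left] at h1
  have h2 : rks wf (Set.Iic u) (u ⊓ v) ≤ rks wf (Set.Iic b) v := by
    rw [rks_modular wf u v]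
    exact rks_mono_set wf (fun z hz => le_trans hz (sup_le hub hvb)) v
  exact h1.trans (nadd_le_nadd_left h2 _)

end IicLemmas

section GModule

variable {G : Type u} [Group G] {A : Type u} [CommRing A] [MulSemiringAction G A]
  {M : Type u} [AddCommGroup M] [Module A M] [DistribMulAction G M]
  (hc : ∀ (g : G) (a : A) (m : M), g • (a • m) = (g • a) • (g • m))

include hc

/-- The image of a submodule under the semilinear action of `g`. -/
def gsmul (g : G) (N : Submodule A M) : Submodule A M where
  carrier := (g • ·) '' (N : Set M)
  add_mem' := by
    rintro a b ⟨m, hm, rfl⟩ ⟨m', hm', rfl⟩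
    exact ⟨m + m', N.add_mem hm hm', by simp [smul_add]⟩
  zero_mem' := ⟨0, N.zero_mem, smul_zero g⟩
  smul_mem' := by
    rintro a x ⟨m, hm, rfl⟩
    refine ⟨(g⁻¹ • a) • m, N.smul_mem _ hm, ?_⟩
    show g • ((g⁻¹ • a) • m) = a • (g • m)
    rw [hc g (g⁻¹ • a) m, smul_inv_smul]

lemma mem_gsmul {g : G} {N : Submodule A M} {m : M} :
    m ∈ gsmul hc g N ↔ ∃ x ∈ N, g • x = m := Iff.rfl

lemma gsmul_gsmul (g h : G) (N : Submodule A M) :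
    gsmul hc g (gsmul hc h N) = gsmul hc (g * h) N := by
  apply SetLike.coe_injective
  show (g • ·) '' ((h • ·) '' (N : Set M)) = ((g * h) • ·) '' (N : Set M)
  rw [← Set.image_comp]
  apply congrArg (· '' (N : Set M))
  funext m
  simp [mul_smul]

lemma gsmul_one (N : Submodule A M) : gsmul hc 1 N = N := by
  apply SetLike.coe_injective
  show ((1 : G) • ·) '' (N : Set M) = N
  simp [one_smul]

lemma gsmul_mono {g : G} {N N' : Submodule A M} (h : N ≤ N') :
    gsmul hc g N ≤ gsmul hc g N' := by
  rintro m ⟨x, hx, rfl⟩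
  exact ⟨x, h hx, rfl⟩

/-- `gsmul g` as an order isomorphism of the submodule lattice. -/
def gOrd (g : G) : Submodule A M ≃o Submodule A M where
  toFun := gsmul hc g
  invFun := gsmul hc g⁻¹
  left_inv := fun N => by rw [gsmul_gsmul, inv_mul_cancel, gsmul_one]
  right_inv := fun N => by rw [gsmul_gsmul, mul_inv_cancel, gsmul_one]
  map_rel_iff' := by
    intro N N'
    constructor
    · intro h
      have h1 : gsmul hc g N ≤ gsmul hc g N' := h
      have h2 := gsmul_mono hc (g := g⁻¹) h1
      rwa [gsmul_gsmul, inv_mul_cancel, gsmul_one, gsmul_gsmul, inv_mul_cancel, gsmul_one] at h2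
    · exact fun h => gsmul_mono hc h

lemma gsmul_strictMono (g : G) {N N' : Submodule A M} (h : N < N') :
    gsmul hc g N < gsmul hc g N' := (gOrd hc g).strictMono h

lemma gsmul_sup (g : G) (N N' : Submodule A M) :
    gsmul hc g (N ⊔ N') = gsmul hc g N ⊔ gsmul hc g N' := (gOrd hc g).map_sup N N'

lemma gsmul_inf (g : G) (N N' : Submodule A M) :
    gsmul hc g (N ⊓ N') = gsmul hc g N ⊓ gsmul hc g N' := (gOrd hc g).map_inf N N'

lemma gsmul_bot (g : G) : gsmul hc g (⊥ : Submodule A M) = ⊥ := (gOrd hc g).map_bot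

lemma gsmul_top (g : G) : gsmul hc g (⊤ : Submodule A M) = ⊤ := (gOrd hc g).map_top

/-- The set of `G`-stable submodules. -/
def Sfix : Set (Submodule A M) := {N | ∀ g : G, gsmul hc g N = N}

lemma bot_mem_Sfix : (⊥ : Submodule A M) ∈ Sfix hc := fun g => gsmul_bot hc g

lemma top_mem_Sfix : (⊤ : Submodule A M) ∈ Sfix hc := fun g => gsmul_top hc g

lemma sup_mem_Sfix {N N' : Submodule A M} (h : N ∈ Sfix hc) (h' : N' ∈ Sfix hc) :
    N ⊔ N' ∈ Sfix hc := fun g => by rw [gsmul_sup, h g, h' g]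

lemma inf_mem_Sfix {N N' : Submodule A M} (h : N ∈ Sfix hc) (h' : N' ∈ Sfix hc) :
    N ⊓ N' ∈ Sfix hc := fun g => by rw [gsmul_inf, h g, h' g]

lemma mem_Sfix_iff_pred {N : Submodule A M} :
    N ∈ Sfix hc ↔ ∀ g : G, ∀ m ∈ N, g • m ∈ N := by
  constructor
  · intro h g m hm
    have : g • m ∈ gsmul hc g N := ⟨m, hm, rfl⟩
    rwa [h g] at this
  · intro h g
    apply le_antisymm
    · rintro m ⟨x, hx, rfl⟩
      exact h g x hx
    · intro m hm
      refine ⟨g⁻¹ • m, h g⁻¹ m hm, ?_⟩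
      show g • (g⁻¹ • m) = m
      rw [smul_inv_smul]

/-- translation invariance of interval lengths -/
lemma rks_gsmul (wf : WellFounded ((· > ·) : Submodule A M → Submodule A M → Prop))
    (g : G) (b x : Submodule A M) :
    rks wf (Set.Iic (gsmul hc g b)) (gsmul hc g x) = rks wf (Set.Iic b) x := by
  apply le_antisymm
  · have h := rks_le_map wf (S := Set.Iic (gsmul hc g b)) (T := Set.Iic b)
      (f := gsmul hc g⁻¹) (P := fun _ => True) (x := gsmul hc g x) trivial ?_
    · rwa [gsmul_gsmul, inv_mul_cancel, gsmul_one] at h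
    · intro u y _ hy hlt
      refine ⟨trivial, ?_, gsmul_strictMono hc g⁻¹ hlt⟩
      have := gsmul_mono hc (g := g⁻¹) hy
      rwa [gsmul_gsmul, inv_mul_cancel, gsmul_one] at this
  · exact rks_le_map wf (S := Set.Iic b) (T := Set.Iic (gsmul hc g b))
      (f := gsmul hc g) (P := fun _ => True) (x := x) trivial
      (fun u y _ hy hlt => ⟨trivial, gsmul_mono hc hy, gsmul_strictMono hc g hlt⟩)

section FinG
variable [Fintype G]

lemma gsmul_finset_sup (h : G) (s : Finset G) (f : G → Submodule A M) :
    gsmul hc h (s.sup f) = s.sup (fun i => gsmul hc h (f i)) := by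
  classical
  induction s using Finset.induction_on with
  | empty => simp [gsmul_bot]
  | @insert g₀ s' hg₀ ih => rw [Finset.sup_insert, Finset.sup_insert, gsmul_sup, ih]

lemma gsmul_finset_inf (h : G) (s : Finset G) (f : G → Submodule A M) :
    gsmul hc h (s.inf f) = s.inf (fun i => gsmul hc h (f i)) := by
  classical
  induction s using Finset.induction_on with
  | empty => simp [gsmul_top]
  | @insert g₀ s' hg₀ ih => rw [Finset.inf_insert, Finset.inf_insert, gsmul_inf, ih]

/-- The `G`-stable closure `x ⊔ ⨆ g, g•y`. -/
def orbSup (x y : Submodule A M) : Submodule A M :=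
  x ⊔ Finset.univ.sup (fun g => gsmul hc g y)

lemma orbSup_mem_Sfix {x : Submodule A M} (hx : x ∈ Sfix hc) (y : Submodule A M) :
    orbSup hc x y ∈ Sfix hc := by
  intro h
  rw [orbSup, gsmul_sup, hx h, gsmul_finset_sup]
  congr 1
  have : ∀ g : G, gsmul hc h (gsmul hc g y) = gsmul hc (h * g) y := fun g => gsmul_gsmul hc h g y
  simp_rw [this]
  apply le_antisymm
  · exact Finset.sup_le fun g _ =>
      Finset.le_sup (f := fun g => gsmul hc g y) (Finset.mem_univ (h * g))
  · apply Finset.sup_le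
    intro g _
    have h2 := Finset.le_sup (f := fun g => gsmul hc (h * g) y) (Finset.mem_univ (h⁻¹ * g))
    calc gsmul hc g y = gsmul hc (h * (h⁻¹ * g)) y := by rw [mul_inv_cancel_left]
      _ ≤ _ := h2

/-- The `G`-core `⨅ g, g•y`. -/
def orbInf (y : Submodule A M) : Submodule A M :=
  Finset.univ.inf (fun g => gsmul hc g y)

lemma orbInf_mem_Sfix (y : Submodule A M) : orbInf hc y ∈ Sfix hc := by
  intro h
  rw [orbInf, gsmul_finset_inf]
  have : ∀ g : G, gsmul hc h (gsmul hc g y) = gsmul hc (h * g) y := fun g => gsmul_gsmul hc h g y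
  simp_rw [this]
  apply le_antisymm
  · apply Finset.le_inf
    intro g _
    have h2 := Finset.inf_le (f := fun g => gsmul hc (h * g) y) (Finset.mem_univ (h⁻¹ * g))
    calc (Finset.univ.inf fun i => gsmul hc (h * i) y) ≤ gsmul hc (h * (h⁻¹ * g)) y := h2
      _ = gsmul hc g y := by rw [mul_inv_cancel_left]
  · exact Finset.le_inf fun g _ =>
      Finset.inf_le (f := fun g => gsmul hc g y) (Finset.mem_univ (h * g))

lemma le_orbSup (x y : Submodule A M) : y ≤ orbSup hc x y := by
  have h := Finset.le_sup (f := fun g => gsmul hc g y) (Finset.mem_univ (1 : G))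
  have h2 : y ≤ Finset.univ.sup fun g => gsmul hc g y :=
    calc y = gsmul hc 1 y := (gsmul_one hc y).symm
      _ ≤ _ := h
  exact le_trans h2 le_sup_right

lemma left_le_orbSup (x y : Submodule A M) : x ≤ orbSup hc x y := le_sup_left

lemma orbSup_le {x y b : Submodule A M} (hb : b ∈ Sfix hc) (hxb : x ≤ b) (hyb : y ≤ b) :
    orbSup hc x y ≤ b := by
  refine sup_le hxb (Finset.sup_le fun g _ => ?_)
  rw [← hb g]
  exact gsmul_mono hc hyb

lemma orbInf_le (y : Submodule A M) : orbInf hc y ≤ y := by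
  have h := Finset.inf_le (f := fun g => gsmul hc g y) (Finset.mem_univ (1 : G))
  calc orbInf hc y ≤ gsmul hc 1 y := h
    _ = y := gsmul_one hc y

lemma le_orbInf {x y : Submodule A M} (hx : x ∈ Sfix hc) (hxy : x ≤ y) :
    x ≤ orbInf hc y := by
  refine Finset.le_inf fun g _ => ?_
  rw [← hx g]
  exact gsmul_mono hc hxy

end FinG

end GModule

section Bounds

variable {G : Type u} [Group G] {A : Type u} [CommRing A] [MulSemiringAction G A]
  {M : Type u} [AddCommGroup M] [Module A M] [DistribMulAction G M]
  (hc : ∀ (g : G) (a : A) (m : M), g • (a • m) = (g • a) • (g • m))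
  [Fintype G]
  (wf : WellFounded ((· > ·) : Submodule A M → Submodule A M → Prop))

/-- Orbit-sup subadditivity bound ("pieces"). -/
lemma pieces (e m' : ℕ) {x y : Submodule A M} (hx : x ∈ Sfix hc) (hxy : x ≤ y)
    (hμ : rks wf (Set.Iic y) x < Ordinal.omega0 ^ (e : Ordinal.{u}) * ((m' : Ordinal) + 1))
    (s : Finset G) :
    rks wf (Set.Iic (x ⊔ s.sup (fun g => gsmul hc g y))) x
      < Ordinal.omega0 ^ (e : Ordinal.{u}) * (((s.card * m' : ℕ) : Ordinal) + 1) := by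
  classical
  induction s using Finset.induction_on with
  | empty =>
    rw [Finset.sup_empty, sup_bot_eq,
      rks_top_eq_zero wf (S := Set.Iic x) (fun z hz => hz)]
    have h1 : (((Finset.card (∅ : Finset G)) * m' : ℕ) : Ordinal) + 1 = 1 := by
      simp
    rw [h1, mul_one]
    exact opow_nat_pos e
  | @insert g₀ s' hg₀ ih =>
    have hxA' : x ≤ x ⊔ s'.sup (fun g => gsmul hc g y) := le_sup_left
    set A' : Submodule A M := x ⊔ s'.sup (fun g => gsmul hc g y) with hA'
    set B : Submodule A M := gsmul hc g₀ y with hB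
    have hxB : x ≤ B := by rw [hB, ← hx g₀]; exact gsmul_mono hc hxy
    have htarget : x ⊔ (insert g₀ s').sup (fun g => gsmul hc g y) = A' ⊔ B := by
      rw [Finset.sup_insert, hA', hB, sup_comm (gsmul hc g₀ y) _, ← sup_assoc]
    rw [htarget]
    have step1 : rks wf (Set.Iic (A' ⊔ B)) x ≤
        rks wf (Set.Iic (A' ⊔ B)) A' ♯ rks wf (Set.Iic A') x := by
      have h := L2A wf (a := A') (b := A' ⊔ B) le_sup_left x
      rwa [sup_eq_right.2 hxA', inf_eq_left.2 hxA'] at h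
    have step2 : rks wf (Set.Iic (A' ⊔ B)) A' ≤ rks wf (Set.Iic y) x := by
      have h1 := rks_pair wf B A'
      have h2 : rks wf (Set.Iic B) (A' ⊓ B) ≤ rks wf (Set.Iic B) x :=
        rks_anti wf (le_inf hxA' hxB)
      have h3 : rks wf (Set.Iic B) x = rks wf (Set.Iic y) x := by
        rw [hB]
        calc rks wf (Set.Iic (gsmul hc g₀ y)) x
            = rks wf (Set.Iic (gsmul hc g₀ y)) (gsmul hc g₀ x) := by rw [hx g₀]
          _ = rks wf (Set.Iic y) x := rks_gsmul hc wf g₀ y x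
      exact h1.trans (h2.trans_eq h3)
    have hcomb := nadd_lt_opow_mul e m' (s'.card * m')
      (lt_of_le_of_lt step2 hμ) ih
    have hfinal := lt_of_le_of_lt step1 hcomb
    have hcast : Ordinal.omega0 ^ (e : Ordinal.{u}) * ((m' : Ordinal) + ((s'.card * m' : ℕ) : Ordinal) + 1)
        = Ordinal.omega0 ^ (e : Ordinal.{u}) * ((((insert g₀ s').card * m' : ℕ) : Ordinal) + 1) := by
      congr 1
      have hn : (s'.card + 1) * m' = m' + s'.card * m' := by ring
      rw [Finset.card_insert_of_notMem hg₀, hn, Nat.cast_add]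
    rwa [hcast] at hfinal

/-- Orbit-core meet subadditivity bound. -/
lemma meetBound (e J : ℕ) {y b : Submodule A M} (hb : b ∈ Sfix hc) (hyb : y ≤ b)
    (hR : rks wf (Set.Iic b) y < Ordinal.omega0 ^ (e : Ordinal.{u}) * ((J : Ordinal) + 1)) :
    ∀ (s : Finset G), s.Nonempty →
      rks wf (Set.Iic b) (s.inf (fun g => gsmul hc g y))
        < Ordinal.omega0 ^ (e : Ordinal.{u}) * (((s.card * J : ℕ) : Ordinal) + 1) := by
  have htrans : ∀ g : G, rks wf (Set.Iic b) (gsmul hc g y) = rks wf (Set.Iic b) y := by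
    intro g
    conv_lhs => rw [← hb g]
    exact rks_gsmul hc wf g b y
  have hgb : ∀ g : G, gsmul hc g y ≤ b := by
    intro g
    rw [← hb g]
    exact gsmul_mono hc hyb
  intro s
  induction s using Finset.cons_induction with
  | empty => intro hs; exact absurd hs Finset.not_nonempty_empty
  | cons a s ha IH =>
    intro _
    rcases s.eq_empty_or_nonempty with rfl | hsne
    · have hsing : (Finset.cons a ∅ ha).inf (fun g => gsmul hc g y) = gsmul hc a y := by
        rw [Finset.inf_cons, Finset.inf_empty, inf_top_eq]
      rw [hsing, htrans a]
      refine lt_of_lt_of_le hR (mul_le_mul_right ?_ _)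
      have hcard : (((Finset.cons a ∅ ha).card * J : ℕ) : Ordinal) = (J : Ordinal) := by
        simp
      rw [hcard]
    · rw [Finset.inf_cons]
      have hvb : s.inf (fun g => gsmul hc g y) ≤ b := by
        obtain ⟨g₁, hg₁⟩ := hsne
        exact le_trans (Finset.inf_le hg₁) (hgb g₁)
      have hmeet := rks_meet wf (hgb a) hvb
      have h1 : rks wf (Set.Iic b) (gsmul hc a y)
          < Ordinal.omega0 ^ (e : Ordinal.{u}) * ((J : Ordinal) + 1) := by
        rw [htrans a]; exact hR
      have hcomb := nadd_lt_opow_mul e J (s.card * J) h1 (IH hsne)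
      have hfinal := lt_of_le_of_lt hmeet hcomb
      have hcast : Ordinal.omega0 ^ (e : Ordinal.{u}) * ((J : Ordinal) + ((s.card * J : ℕ) : Ordinal) + 1)
          = Ordinal.omega0 ^ (e : Ordinal.{u}) * ((((Finset.cons a s ha).card * J : ℕ) : Ordinal) + 1) := by
        congr 1
        have hn : (s.card + 1) * J = J + s.card * J := by ring
        rw [Finset.card_cons, hn, Nat.cast_add]
      rwa [hcast] at hfinal

end Bounds

section Main

variable {G : Type u} [Group G] {A : Type u} [CommRing A] [MulSemiringAction G A]
  {M : Type u} [AddCommGroup M] [Module A M] [DistribMulAction G M]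
  (hc : ∀ (g : G) (a : A) (m : M), g • (a • m) = (g • a) • (g • m))
  [Fintype G]
  (wf : WellFounded ((· > ·) : Submodule A M → Submodule A M → Prop))

lemma interG {w z : Submodule A M} (hwz : w ≤ z) :
    (Sfix hc ∩ Set.Iic z) ∩ Set.Iic w = Sfix hc ∩ Set.Iic w := by
  ext u
  constructor
  · rintro ⟨⟨h1, _⟩, h3⟩
    exact ⟨h1, h3⟩
  · rintro ⟨h1, h2⟩
    exact ⟨⟨h1, le_trans h2 hwz⟩, h2⟩

/-- Relative `L1` in the `G`-stable lattice. -/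
lemma L1G {w z b : Submodule A M} (hzb : z ≤ b) (hwz : w ≤ z) :
    rks wf (Sfix hc ∩ Set.Iic b) z + rks wf (Sfix hc ∩ Set.Iic z) w
      ≤ rks wf (Sfix hc ∩ Set.Iic b) w := by
  have h := rks_add_le wf (S := Sfix hc ∩ Set.Iic b) (a := z)
    (rks wf ((Sfix hc ∩ Set.Iic b) ∩ Set.Iic z) w) w hwz le_rfl
  rwa [rks_congr_set wf (interG hc hzb)] at h

/-- Relative `L2` in the `G`-stable lattice. -/
lemma L2G {w z : Submodule A M} (hwS : w ∈ Sfix hc) (hwz : w ≤ z) (x : Submodule A M) :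
    rks wf (Sfix hc ∩ Set.Iic z) x
      ≤ rks wf (Sfix hc ∩ Set.Iic z) (x ⊔ w) ♯ rks wf (Sfix hc ∩ Set.Iic w) (x ⊓ w) := by
  have h := rks_le_nadd wf (S := Sfix hc ∩ Set.Iic z) (a := w) ⟨hwS, hwz⟩
    (fun hu hv => ⟨sup_mem_Sfix hc hu.1 hv.1,
      Set.mem_Iic.2 (sup_le (Set.mem_Iic.1 hu.2) (Set.mem_Iic.1 hv.2))⟩)
    (fun hu hv => ⟨inf_mem_Sfix hc hu.1 hv.1,
      Set.mem_Iic.2 (le_trans inf_le_left (Set.mem_Iic.1 hu.2))⟩) x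
  rwa [rks_congr_set wf (interG hc hwz)] at h

theorem mainT (e : ℕ) : ∀ (k : ℕ) (x b : Submodule A M), x ∈ Sfix hc → b ∈ Sfix hc → x ≤ b →
    rks wf (Sfix hc ∩ Set.Iic b) x
      < Ordinal.omega0 ^ (e : Ordinal.{u}) * ((k : Ordinal) + 1) →
    rks wf (Set.Iic b) x
      < Ordinal.omega0 ^ (e : Ordinal.{u}) * (((Fintype.card G * k : ℕ) : Ordinal) + 1) := by
  induction e using Nat.strong_induction_on with
  | _ e ihe =>
  intro k
  induction k using Nat.strong_induction_on with
  | _ k ihk =>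
  intro x b hxS hbS hxb hG
  set n : ℕ := Fintype.card G with hn
  rcases k with _ | k'
  · -- k = 0
    rcases e with _ | e'
    · -- e = 0
      rcases eq_or_lt_of_le hxb with rfl | hlt
      · rw [rks_top_eq_zero wf (S := Set.Iic x) (fun z hz => hz)]
        have h1 : ((n * 0 : ℕ) : Ordinal) + 1 = 1 := by simp
        rw [h1, mul_one]
        exact opow_nat_pos 0
      · exfalso
        have h1 : rks wf (Sfix hc ∩ Set.Iic b) b < rks wf (Sfix hc ∩ Set.Iic b) x :=
          rks_lt_of wf ⟨hbS, Set.mem_Iic.2 le_rfl⟩ hlt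
        have h2 : (0 : Ordinal) < rks wf (Sfix hc ∩ Set.Iic b) x :=
          lt_of_le_of_lt zero_le h1
        have h3 : rks wf (Sfix hc ∩ Set.Iic b) x < 1 := by simpa using hG
        rw [Ordinal.lt_one_iff_zero] at h3
        rw [h3] at h2
        exact lt_irrefl _ h2
    · -- e = e' + 1, k = 0
      have hβsm : rks wf (Sfix hc ∩ Set.Iic b) x
          < Ordinal.omega0 ^ ((e' + 1 : ℕ) : Ordinal.{u}) := by simpa using hG
      have hj := div_lt_omega0_of_lt_opow_succ hβsm
      obtain ⟨j, hjeq⟩ := Ordinal.lt_omega0.1 hj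
      have hβj : rks wf (Sfix hc ∩ Set.Iic b) x
          < Ordinal.omega0 ^ (e' : Ordinal.{u}) * ((j : Ordinal) + 1) := by
        have h4 := lt_opow_mul_div_succ e' (rks wf (Sfix hc ∩ Set.Iic b) x)
        rwa [hjeq] at h4
      have hrec := ihe e' (Nat.lt_succ_self e') j x b hxS hbS hxb hβj
      calc rks wf (Set.Iic b) x
          < Ordinal.omega0 ^ (e' : Ordinal.{u}) * (((n * j : ℕ) : Ordinal) + 1) := hrec
        _ < Ordinal.omega0 ^ (e' : Ordinal.{u}) * Ordinal.omega0 := by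
            rw [mul_lt_mul_iff_of_pos_left (opow_nat_pos e')]
            have h5 : ((n * j : ℕ) : Ordinal) + 1 = ((n * j + 1 : ℕ) : Ordinal) := by norm_cast
            rw [h5]
            exact Ordinal.nat_lt_omega0 _
        _ = Ordinal.omega0 ^ ((e' + 1 : ℕ) : Ordinal.{u}) := (opow_nat_succ e').symm
        _ ≤ Ordinal.omega0 ^ ((e' + 1 : ℕ) : Ordinal.{u}) * (((n * 0 : ℕ) : Ordinal) + 1) := by
            have h6 : ((n * 0 : ℕ) : Ordinal) + 1 = 1 := by simp
            rw [h6, mul_one]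
  · -- k = k' + 1
    have hWne : x ∈ {w : Submodule A M | w ∈ Sfix hc ∧ x ≤ w ∧ w ≤ b ∧
        rks wf (Sfix hc ∩ Set.Iic w) x < Ordinal.omega0 ^ (e : Ordinal.{u})} := by
      refine ⟨hxS, le_rfl, hxb, ?_⟩
      rw [rks_top_eq_zero wf (S := Sfix hc ∩ Set.Iic x) (fun z hz => hz.2)]
      exact opow_nat_pos e
    obtain ⟨w, hwmem, hwmax⟩ := wf.has_min _ ⟨x, hWne⟩
    obtain ⟨hwS, hxw, hwb, hwsmall⟩ := hwmem
    -- D-step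
    have hDx : rks wf (Set.Iic w) x < Ordinal.omega0 ^ (e : Ordinal.{u}) := by
      have h0 := ihk 0 (Nat.succ_pos k') x w hxS hwS hxw (by
        have h1 : ((0 : ℕ) : Ordinal) + 1 = 1 := by simp
        rw [h1, mul_one]
        exact hwsmall)
      have h1 : ((n * 0 : ℕ) : Ordinal) + 1 = 1 := by simp
      rwa [h1, mul_one] at h0
    -- P property
    have hP : ∀ z, z ∈ Sfix hc → w < z → z ≤ b →
        Ordinal.omega0 ^ (e : Ordinal.{u}) ≤ rks wf (Sfix hc ∩ Set.Iic z) w := by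
      intro z hzS hwz hzb
      by_contra hcon
      push_neg at hcon
      have hzW : z ∈ {w : Submodule A M | w ∈ Sfix hc ∧ x ≤ w ∧ w ≤ b ∧
          rks wf (Sfix hc ∩ Set.Iic w) x < Ordinal.omega0 ^ (e : Ordinal.{u})} := by
        refine ⟨hzS, le_trans hxw hwz.le, hzb, ?_⟩
        have h2 := L2G hc wf hwS hwz.le x
        rw [sup_eq_right.2 hxw, inf_eq_left.2 hxw] at h2
        exact lt_of_le_of_lt h2 (nadd_lt_opow e _ _ hcon hwsmall)
      exact hwmax z hzW hwz
    -- G-side bound at w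
    have hGw : rks wf (Sfix hc ∩ Set.Iic b) w
        < Ordinal.omega0 ^ (e : Ordinal.{u}) * (((k' + 1 : ℕ) : Ordinal) + 1) :=
      lt_of_le_of_lt (rks_anti wf hxw) hG
    -- coefficient drop
    have hdrop : ∀ z, z ∈ Sfix hc → w < z → z ≤ b →
        rks wf (Set.Iic b) z
          < Ordinal.omega0 ^ (e : Ordinal.{u}) * (((n * k' : ℕ) : Ordinal) + 1) := by
      intro z hzS hwz hzb
      refine ihk k' (Nat.lt_succ_self k') z b hzS hbS hzb ?_
      by_contra hcon
      push_neg at hcon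
      have h1 : Ordinal.omega0 ^ (e : Ordinal.{u}) * ((k' : Ordinal) + 1)
            + Ordinal.omega0 ^ (e : Ordinal.{u})
          ≤ rks wf (Sfix hc ∩ Set.Iic b) w :=
        le_trans (add_le_add hcon (hP z hzS hwz hzb)) (L1G hc wf hzb hwz.le)
      rw [← mul_add_one] at h1
      have h2 : ((k' + 1 : ℕ) : Ordinal) + 1 = ((k' : Ordinal) + 1) + 1 := by norm_cast
      rw [h2] at hGw
      exact absurd (lt_of_le_of_lt h1 hGw) (lt_irrefl _)
    -- key bound at (w, b)
    have hkey : rks wf (Set.Iic b) w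
        < Ordinal.omega0 ^ (e : Ordinal.{u}) * (((n * (k' + 1) : ℕ) : Ordinal) + 1) := by
      set J : ℕ := n * (k' + 1) + 1 with hJ
      have hJcast : ((J : ℕ) : Ordinal) < ((J : ℕ) : Ordinal) + 1 := by
        rw [Ordinal.add_one_eq_succ]
        exact Order.lt_succ _
      -- Step (i) : finiteness
      have hfin : ∃ C : ℕ, rks wf (Set.Iic b) w
          < Ordinal.omega0 ^ (e : Ordinal.{u}) * ((C : Ordinal) + 1) := by
        by_cases hY : Set.Nonempty {y : Submodule A M | w < y ∧ y ≤ b ∧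
            Ordinal.omega0 ^ (e : Ordinal.{u}) * (J : Ordinal) ≤ rks wf (Set.Iic b) y}
        · obtain ⟨y, hymem, hymax⟩ := wf.has_min _ hY
          obtain ⟨hwy, hyb, hyJ⟩ := hymem
          have hyle : rks wf (Set.Iic b) y
              ≤ Ordinal.omega0 ^ (e : Ordinal.{u}) * (J : Ordinal) := by
            apply rks_le wf
            intro z hzb hyz
            by_contra hcon2
            push_neg at hcon2
            exact hymax z ⟨lt_trans hwy hyz, hzb, hcon2⟩ hyz
          have hscS := orbInf_mem_Sfix hc y
          have hwsc : w ≤ orbInf hc y := le_orbInf hc hwS hwy.le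
          rcases eq_or_lt_of_le hwsc with heq | hlt
          · refine ⟨n * J, ?_⟩
            have hmb := meetBound hc wf e J hbS hyb
              (lt_of_le_of_lt hyle
                ((mul_lt_mul_iff_of_pos_left (opow_nat_pos e)).2 hJcast))
              Finset.univ Finset.univ_nonempty
            have hcard : (((Finset.univ : Finset G).card * J : ℕ) : Ordinal)
                = ((n * J : ℕ) : Ordinal) := by
              rw [Finset.card_univ, hn]
            rw [hcard] at hmb
            rw [heq]
            exact hmb
          · exfalso
            have hscb : orbInf hc y ≤ b := le_trans (orbInf_le hc y) hyb
            have hrec := hdrop (orbInf hc y) hscS hlt hscb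
            have hge : Ordinal.omega0 ^ (e : Ordinal.{u}) * (J : Ordinal)
                ≤ rks wf (Set.Iic b) (orbInf hc y) :=
              le_trans hyJ (rks_anti wf (orbInf_le hc y))
            have hle2 : Ordinal.omega0 ^ (e : Ordinal.{u}) * (((n * k' : ℕ) : Ordinal) + 1)
                ≤ Ordinal.omega0 ^ (e : Ordinal.{u}) * (J : Ordinal) := by
              apply mul_le_mul_right
              have h7 : n * k' + 1 ≤ J := by
                rw [hJ, Nat.mul_succ]
                omega
              calc ((n * k' : ℕ) : Ordinal) + 1 = ((n * k' + 1 : ℕ) : Ordinal) := by norm_cast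
                _ ≤ (J : Ordinal) := by exact_mod_cast h7
            exact absurd (lt_of_le_of_lt (le_trans hle2 hge) hrec) (lt_irrefl _)
        · refine ⟨J, ?_⟩
          have h1 : rks wf (Set.Iic b) w
              ≤ Ordinal.omega0 ^ (e : Ordinal.{u}) * (J : Ordinal) := by
            apply rks_le wf
            intro z hzb hwz
            by_contra hcon2
            push_neg at hcon2
            exact hY ⟨z, hwz, hzb, hcon2⟩
          exact lt_of_le_of_lt h1 ((mul_lt_mul_iff_of_pos_left (opow_nat_pos e)).2 hJcast)
      -- Step (ii)
      obtain ⟨C0, hC0⟩ := hfin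
      by_contra hbig
      push_neg at hbig
      have hCfin : rks wf (Set.Iic b) w / Ordinal.omega0 ^ (e : Ordinal.{u}) < Ordinal.omega0 := by
        rw [Ordinal.div_lt (opow_nat_ne e)]
        calc rks wf (Set.Iic b) w
            < Ordinal.omega0 ^ (e : Ordinal.{u}) * ((C0 : Ordinal) + 1) := hC0
          _ ≤ Ordinal.omega0 ^ (e : Ordinal.{u}) * Ordinal.omega0 := by
              apply mul_le_mul_right
              have h5 : ((C0 : ℕ) : Ordinal) + 1 = ((C0 + 1 : ℕ) : Ordinal) := by norm_cast
              rw [h5]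
              exact (Ordinal.nat_lt_omega0 _).le
      obtain ⟨Cn, hCn⟩ := Ordinal.lt_omega0.1 hCfin
      have hRC : rks wf (Set.Iic b) w
          < Ordinal.omega0 ^ (e : Ordinal.{u}) * ((Cn : Ordinal) + 1) := by
        have h4 := lt_opow_mul_div_succ e (rks wf (Set.Iic b) w)
        rwa [hCn] at h4
      have hCge : Ordinal.omega0 ^ (e : Ordinal.{u}) * (Cn : Ordinal) ≤ rks wf (Set.Iic b) w := by
        have h5 := Ordinal.mul_div_le (rks wf (Set.Iic b) w) (Ordinal.omega0 ^ (e : Ordinal.{u}))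
        rwa [hCn] at h5
      have hCnge : n * (k' + 1) + 1 ≤ Cn := by
        have h6 := lt_of_le_of_lt hbig hRC
        have h7 := (mul_lt_mul_iff_of_pos_left (opow_nat_pos e)).1 h6
        have h8 : ((n * (k' + 1) : ℕ) : Ordinal) < (Cn : Ordinal) := by
          rw [Ordinal.add_one_eq_succ, Ordinal.add_one_eq_succ, Order.succ_lt_succ_iff] at h7
          exact h7
        exact_mod_cast Nat.succ_le_of_lt (by exact_mod_cast h8)
      obtain ⟨Cm, rfl⟩ : ∃ Cm, Cn = Cm + 1 := ⟨Cn - 1, by omega⟩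
      have hCm : Ordinal.omega0 ^ (e : Ordinal.{u}) * (Cm : Ordinal) < rks wf (Set.Iic b) w := by
        refine lt_of_lt_of_le ?_ hCge
        rw [mul_lt_mul_iff_of_pos_left (opow_nat_pos e)]
        exact_mod_cast Nat.lt_succ_self Cm
      obtain ⟨y₂, hy₂b, hwy₂, hy₂rk⟩ := rks_exists_of_lt wf hCm
      have hμ : rks wf (Set.Iic y₂) w
          < Ordinal.omega0 ^ (e : Ordinal.{u}) * ((1 : Ordinal) + 1) := by
        by_contra hcon2
        push_neg at hcon2
        have h9 := L1A wf hwy₂.le hy₂b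
        have h10 : Ordinal.omega0 ^ (e : Ordinal.{u}) * (Cm : Ordinal)
              + Ordinal.omega0 ^ (e : Ordinal.{u}) * ((1 : Ordinal) + 1)
            ≤ rks wf (Set.Iic b) w :=
          le_trans (add_le_add hy₂rk hcon2) h9
        rw [← mul_add] at h10
        have h11 : (Cm : Ordinal) + ((1 : Ordinal) + 1) = ((Cm + 1 : ℕ) : Ordinal) + 1 := by
          push_cast
          rw [add_assoc]
        rw [h11] at h10
        exact absurd (lt_of_le_of_lt h10 hRC) (lt_irrefl _)
      have hysS := orbSup_mem_Sfix hc hwS y₂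
      have hwys : w < orbSup hc w y₂ := lt_of_lt_of_le hwy₂ (le_orbSup hc w y₂)
      have hysb : orbSup hc w y₂ ≤ b := orbSup_le hc hbS hwb hy₂b
      have hrec := hdrop (orbSup hc w y₂) hysS hwys hysb
      have hμ' : rks wf (Set.Iic y₂) w
          < Ordinal.omega0 ^ (e : Ordinal.{u}) * (((1 : ℕ) : Ordinal) + 1) := by
        rw [Nat.cast_one]
        exact hμ
      have hpieces := pieces hc wf e 1 hwS hwy₂.le hμ' Finset.univ
      have hpieces2 : rks wf (Set.Iic (orbSup hc w y₂)) w
          < Ordinal.omega0 ^ (e : Ordinal.{u}) * ((n : Ordinal) + 1) := by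
        have hcard : (((Finset.univ : Finset G).card * 1 : ℕ) : Ordinal) = (n : Ordinal) := by
          rw [Nat.mul_one, Finset.card_univ, hn]
        rw [hcard] at hpieces
        exact hpieces
      have hfin2 := L2A wf (a := orbSup hc w y₂) (b := b) hysb w
      rw [sup_eq_right.2 hwys.le, inf_eq_left.2 hwys.le] at hfin2
      have hcomb := nadd_lt_opow_mul e (n * k') n hrec hpieces2
      have h12 : ((n * k' : ℕ) : Ordinal) + (n : Ordinal) + 1
          = ((n * (k' + 1) : ℕ) : Ordinal) + 1 := by
        have h13 : n * (k' + 1) = n * k' + n := Nat.mul_succ n k'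
        rw [h13, Nat.cast_add]
      have h14 := lt_of_le_of_lt hfin2 hcomb
      rw [h12] at h14
      exact absurd h14 (not_lt.2 hbig)
    -- combine
    have hfin3 := L2A wf (a := w) (b := b) hwb x
    rw [sup_eq_right.2 hxw, inf_eq_left.2 hxw] at hfin3
    have hDx' : rks wf (Set.Iic w) x
        < Ordinal.omega0 ^ (e : Ordinal.{u}) * (((0 : ℕ) : Ordinal) + 1) := by
      have h1 : ((0 : ℕ) : Ordinal) + 1 = 1 := by simp
      rw [h1, mul_one]
      exact hDx
    have hcomb2 := nadd_lt_opow_mul e (n * (k' + 1)) 0 hkey hDx'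
    have h13 : ((n * (k' + 1) : ℕ) : Ordinal) + ((0 : ℕ) : Ordinal) + 1
        = ((n * (k' + 1) : ℕ) : Ordinal) + 1 := by simp
    rw [h13] at hcomb2
    exact lt_of_le_of_lt hfin3 hcomb2

end Main

end Stmt19

open Stmt19

/-- Let `G` be a finite group of order `n` acting by ring automorphisms
on a commutative noetherian ring `A` of finite Krull dimension `d`, and let `M` be a
finitely generated `GA`-module (an `A`-module with a compatible `G`-action) whose Krull
dimension as an `A`-module is at most `d` (i.e. `ℓ_A(M) < ω^(d+1)`, the ordinal length
`ℓ_A(M)` being `gtRank ⊥` in the lattice of `A`-submodules). Writing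
`ℓ_A(M) = ω^d·ℓ_d(M) + ρ` and `ℓ_{GA}(M) = ω^d·ℓ_{G,d}(M) + ρ'` with `ρ, ρ' < ω^d`
(where `ℓ_{GA}(M)` is `gtRank ⊥` in the lattice of `G`-invariant `A`-submodules), we have
`ℓ_{G,d}(M) ≤ ℓ_d(M) ≤ n·ℓ_{G,d}(M)`. -/
theorem length_coefficient_bounds_for_finite_group_action
    (G : Type u) [Group G] [Finite G] (n : ℕ) (hn : Nat.card G = n)
    (A : Type u) [CommRing A] [IsNoetherianRing A] [MulSemiringAction G A]
    (d : ℕ) (hA : ringKrullDim A = (d : ℕ))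
    (M : Type u) [AddCommGroup M] [Module A M] [Module.Finite A M]
    [DistribMulAction G M]
    (hcompat : ∀ (g : G) (a : A) (m : M), g • (a • m) = (g • a) • (g • m))
    (hMdim : gtRank (⊥ : Submodule A M) < Ordinal.omega0 ^ ((d : Ordinal.{u}) + 1))
    (ld lGd : ℕ) (ρ ρ' : Ordinal.{u})
    (hρ : ρ < Ordinal.omega0 ^ (d : Ordinal.{u}))
    (hρ' : ρ' < Ordinal.omega0 ^ (d : Ordinal.{u}))
    (hl : gtRank (⊥ : Submodule A M) = Ordinal.omega0 ^ (d : Ordinal.{u}) * ld + ρ)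
    (hlG : gtRank ((⟨⊥, fun g m hm => by simp at hm; simp [hm]⟩ :
        {N : Submodule A M // ∀ g : G, ∀ m ∈ N, g • m ∈ N}))
      = Ordinal.omega0 ^ (d : Ordinal.{u}) * lGd + ρ') :
    lGd ≤ ld ∧ ld ≤ n * lGd := by
  classical
  letI : Fintype G := Fintype.ofFinite G
  have hnat : IsNoetherian A M := inferInstance
  have wfGT : WellFoundedGT (Submodule A M) := inferInstance
  have wf : WellFounded ((· > ·) : Submodule A M → Submodule A M → Prop) := wfGT.wf
  set W : Ordinal.{u} := Ordinal.omega0 ^ (d : Ordinal.{u}) with hW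
  have hWpos : (0 : Ordinal) < W := opow_nat_pos d
  -- identify the A-side length
  have eA : gtRank (⊥ : Submodule A M) = rks wf (Set.Iic (⊤ : Submodule A M)) ⊥ := by
    rw [gtRank_eq_rks wf ⊥]
    exact (rks_congr_set wf (Set.Iic_top) ⊥).symm
  -- identify the G-side length
  have eG : gtRank ((⟨⊥, fun g m hm => by simp at hm; simp [hm]⟩ :
        {N : Submodule A M // ∀ g : G, ∀ m ∈ N, g • m ∈ N}))
      = rks wf (Sfix hcompat ∩ Set.Iic (⊤ : Submodule A M)) ⊥ := by
    rw [gtRank_subtype_eq_rks wf (fun N : Submodule A M => ∀ g : G, ∀ m ∈ N, g • m ∈ N) ⊥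
      (fun g m hm => by simp at hm; simp [hm])]
    have he : {y : Submodule A M | ∀ g : G, ∀ m ∈ y, g • m ∈ y}
        = Sfix hcompat ∩ Set.Iic (⊤ : Submodule A M) := by
      ext N
      constructor
      · intro h
        exact ⟨(mem_Sfix_iff_pred hcompat).2 h, Set.mem_Iic.2 le_top⟩
      · intro h
        exact (mem_Sfix_iff_pred hcompat).1 h.1
    rw [rks_congr_set wf he ⊥]
  rw [eA] at hl
  rw [eG] at hlG
  -- bounds
  have hGlt : rks wf (Sfix hcompat ∩ Set.Iic (⊤ : Submodule A M)) ⊥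
      < W * ((lGd : Ordinal) + 1) := by
    rw [hlG, mul_add_one]
    exact add_lt_add_right hρ' _
  have hAlt : rks wf (Set.Iic (⊤ : Submodule A M)) ⊥ < W * ((ld : Ordinal) + 1) := by
    rw [hl, mul_add_one]
    exact add_lt_add_right hρ _
  have hAge : W * (ld : Ordinal) ≤ rks wf (Set.Iic (⊤ : Submodule A M)) ⊥ := by
    rw [hl]
    exact le_self_add
  have hGge : W * (lGd : Ordinal) ≤ rks wf (Sfix hcompat ∩ Set.Iic (⊤ : Submodule A M)) ⊥ := by
    rw [hlG]
    exact le_self_add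
  constructor
  · -- lGd ≤ ld
    have hmono : rks wf (Sfix hcompat ∩ Set.Iic (⊤ : Submodule A M)) ⊥
        ≤ rks wf (Set.Iic (⊤ : Submodule A M)) ⊥ :=
      rks_mono_set wf Set.inter_subset_right ⊥
    have h1 : W * (lGd : Ordinal) < W * ((ld : Ordinal) + 1) :=
      lt_of_le_of_lt (le_trans hGge hmono) hAlt
    have h2 := (mul_lt_mul_iff_of_pos_left hWpos).1 h1
    have h3 : lGd < ld + 1 := by exact_mod_cast h2
    omega
  · -- ld ≤ n * lGd
    have hmain := mainT hcompat wf d lGd ⊥ ⊤ (bot_mem_Sfix hcompat) (top_mem_Sfix hcompat)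
      bot_le hGlt
    have h1 : W * (ld : Ordinal) < W * (((Fintype.card G * lGd : ℕ) : Ordinal) + 1) :=
      lt_of_le_of_lt hAge hmain
    have h2 := (mul_lt_mul_iff_of_pos_left hWpos).1 h1
    have h3 : ld < Fintype.card G * lGd + 1 := by exact_mod_cast h2
    have h4 : n = Fintype.card G := by rw [← hn, Nat.card_eq_fintype_card]
    rw [h4]
    exact Nat.lt_succ_iff.1 h3
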